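/- For all real s and positive reals a, b with a > b > 0, the improper integral ∫₀^∞ sin(a s) J₀(b s) ds converges and equals (a² - b²)^{-1/2}, where J₀ is the Bessel function of the first kind of order zero. -/

import Mathlib

open MeasureTheory Real Filter Set Topology

/-- The Bessel function of the first kind of order zero,
`J₀(x) = (1/π) ∫₀^π cos (x sin θ) dθ`. -/
noncomputable def besselJ0 (x : ℝ) : ℝ :=
  (1 / Real.pi) * ∫ θ in (0:ℝ)..Real.pi, Real.cos (x * Real.sin θ)

noncomputable def bw (u : ℝ) : ℝ := (Real.sqrt (1 - u^2))⁻¹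

lemma bw_nonneg (u : ℝ) : 0 ≤ bw u := inv_nonneg.2 (Real.sqrt_nonneg _)

lemma bw_measurable : Measurable bw :=
  ((measurable_const.sub (measurable_id.pow_const 2)).sqrt).inv

lemma sin_injOn : Set.InjOn Real.sin (Set.Ioo 0 (Real.pi/2)) := by
  apply Real.injOn_sin.mono
  intro x hx
  constructor
  · linarith [hx.1, Real.pi_pos]
  · linarith [hx.2]

lemma sin_image : Real.sin '' Set.Ioo 0 (Real.pi/2) = Set.Ioo (0:ℝ) 1 := by
  ext u
  constructor
  · rintro ⟨θ, hθ, rfl⟩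
    refine ⟨Real.sin_pos_of_pos_of_lt_pi hθ.1 (by linarith [hθ.2, Real.pi_pos]), ?_⟩
    calc Real.sin θ < Real.sin (Real.pi/2) := by
          apply Real.strictMonoOn_sin ⟨by linarith [hθ.1, Real.pi_pos], hθ.2.le⟩
            ⟨by linarith [Real.pi_pos], le_refl _⟩ hθ.2
      _ = 1 := Real.sin_pi_div_two
  · intro hu
    exact ⟨Real.arcsin u, ⟨Real.arcsin_pos.2 hu.1, Real.arcsin_lt_pi_div_two.2 hu.2⟩,
      Real.sin_arcsin (by linarith [hu.1]) hu.2.le⟩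

lemma sin_hasDeriv : ∀ θ ∈ Set.Ioo 0 (Real.pi/2),
    HasDerivWithinAt Real.sin (Real.cos θ) (Set.Ioo 0 (Real.pi/2)) θ :=
  fun θ _ => (Real.hasDerivAt_sin θ).hasDerivWithinAt

lemma cov_sin (g : ℝ → ℝ) :
    ∫ u in Set.Ioo (0:ℝ) 1, g u
      = ∫ θ in Set.Ioo 0 (Real.pi/2), |Real.cos θ| * g (Real.sin θ) := by
  rw [← sin_image]
  simpa using integral_image_eq_integral_abs_deriv_smul measurableSet_Ioo sin_hasDeriv sin_injOn g

lemma cov_sin_integrableOn (g : ℝ → ℝ) :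
    IntegrableOn g (Set.Ioo (0:ℝ) 1)
      ↔ IntegrableOn (fun θ => |Real.cos θ| * g (Real.sin θ)) (Set.Ioo 0 (Real.pi/2)) := by
  rw [← sin_image]
  simpa using integrableOn_image_iff_integrableOn_abs_deriv_smul measurableSet_Ioo sin_hasDeriv
    sin_injOn g

lemma sqrt_one_sub_sin_sq {θ : ℝ} (h : θ ∈ Set.Ioo 0 (Real.pi/2)) :
    Real.sqrt (1 - Real.sin θ^2) = Real.cos θ := by
  rw [show (1 : ℝ) - Real.sin θ^2 = Real.cos θ^2 by
    have := Real.sin_sq_add_cos_sq θ; linarith]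
  exact Real.sqrt_sq (Real.cos_nonneg_of_mem_Icc
    ⟨by linarith [h.1, Real.pi_pos], h.2.le⟩)

lemma cos_pos_of_mem {θ : ℝ} (h : θ ∈ Set.Ioo 0 (Real.pi/2)) : 0 < Real.cos θ :=
  Real.cos_pos_of_mem_Ioo ⟨by linarith [h.1, Real.pi_pos], h.2⟩

lemma bw_integrableOn : IntegrableOn bw (Set.Ioo (0:ℝ) 1) := by
  rw [cov_sin_integrableOn]
  apply (integrableOn_const (by simp [Real.pi_pos] : volume (Set.Ioo 0 (Real.pi/2)) ≠ ⊤) :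
    IntegrableOn (fun _ => (1:ℝ)) _ _).congr_fun ?_ measurableSet_Ioo
  intro θ hθ
  have hc := cos_pos_of_mem hθ
  simp only [bw, sqrt_one_sub_sin_sq hθ, abs_of_pos hc]
  field_simp

lemma integrable_mul_bw {h : ℝ → ℝ} (hm : Measurable h) {C : ℝ}
    (hC : ∀ u ∈ Set.Ioo (0:ℝ) 1, |h u| ≤ C) :
    IntegrableOn (fun u => h u * bw u) (Set.Ioo (0:ℝ) 1) := by
  apply Integrable.mono' (bw_integrableOn.const_mul C)
    (hm.mul bw_measurable).aestronglyMeasurable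
  filter_upwards [ae_restrict_mem measurableSet_Ioo] with u hu
  rw [Real.norm_eq_abs, Pi.mul_apply, abs_mul, abs_of_nonneg (bw_nonneg u)]
  exact mul_le_mul_of_nonneg_right (hC u hu) (bw_nonneg u)
lemma besselJ0_eq (x : ℝ) :
    besselJ0 x = (2/Real.pi) * ∫ u in Set.Ioo (0:ℝ) 1, Real.cos (x*u) * bw u := by
  have hcont : ∀ y z : ℝ, IntervalIntegrable (fun θ => Real.cos (x * Real.sin θ)) volume y z :=
    fun y z => (Real.continuous_cos.comp (continuous_const.mul Real.continuous_sin)).intervalIntegrable y z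
  have hsplit : ∫ θ in (0:ℝ)..Real.pi, Real.cos (x * Real.sin θ)
      = (∫ θ in (0:ℝ)..(Real.pi/2), Real.cos (x * Real.sin θ))
        + ∫ θ in (Real.pi/2)..Real.pi, Real.cos (x * Real.sin θ) :=
    (intervalIntegral.integral_add_adjacent_intervals (hcont 0 (Real.pi/2)) (hcont (Real.pi/2) Real.pi)).symm
  have hsym : ∫ θ in (Real.pi/2)..Real.pi, Real.cos (x * Real.sin θ)
      = ∫ θ in (0:ℝ)..(Real.pi/2), Real.cos (x * Real.sin θ) := by
    have := intervalIntegral.integral_comp_sub_left (a := (0:ℝ)) (b := Real.pi/2)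
      (fun θ => Real.cos (x * Real.sin θ)) Real.pi
    rw [show Real.pi - Real.pi/2 = Real.pi/2 by ring, sub_zero] at this
    rw [← this]
    apply intervalIntegral.integral_congr
    intro θ _
    simp [Real.sin_pi_sub]
  have hIoo : ∫ θ in (0:ℝ)..(Real.pi/2), Real.cos (x * Real.sin θ)
      = ∫ θ in Set.Ioo (0:ℝ) (Real.pi/2), Real.cos (x * Real.sin θ) := by
    rw [intervalIntegral.integral_of_le (by positivity), integral_Ioc_eq_integral_Ioo]
  have hcov : ∫ u in Set.Ioo (0:ℝ) 1, Real.cos (x*u) * bw u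
      = ∫ θ in Set.Ioo (0:ℝ) (Real.pi/2), Real.cos (x * Real.sin θ) := by
    rw [cov_sin (fun u => Real.cos (x*u) * bw u)]
    apply setIntegral_congr_fun measurableSet_Ioo
    intro θ hθ
    have hc := cos_pos_of_mem hθ
    simp only [bw, sqrt_one_sub_sin_sq hθ, abs_of_pos hc]
    field_simp
  rw [besselJ0, hsplit, hsym, hIoo, hcov]
  ring

lemma inner_integral {a c : ℝ} (ha : 0 < a) (hca : c < a) (hc : -a < c) (T : ℝ) :
    ∫ s in (0:ℝ)..T, Real.sin (a*s) * Real.cos (c*s)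
      = a/(a^2-c^2) - (Real.cos ((a+c)*T)/(a+c) + Real.cos ((a-c)*T)/(a-c))/2 := by
  have hpc : (0:ℝ) < a + c := by linarith
  have hmc : (0:ℝ) < a - c := by linarith
  have hsin : ∀ α : ℝ, α ≠ 0 → ∫ s in (0:ℝ)..T, Real.sin (α*s) = (1 - Real.cos (α*T))/α := by
    intro α hα
    rw [intervalIntegral.integral_comp_mul_left Real.sin hα]
    simp [integral_sin]
    ring
  have heq : ∀ s : ℝ, Real.sin (a*s) * Real.cos (c*s)
      = (Real.sin ((a+c)*s) + Real.sin ((a-c)*s))/2 := by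
    intro s
    rw [show (a+c)*s = a*s + c*s by ring, show (a-c)*s = a*s - c*s by ring,
      Real.sin_add, Real.sin_sub]
    ring
  rw [intervalIntegral.integral_congr (fun s _ => heq s)]
  have h1 : IntervalIntegrable (fun s => Real.sin ((a+c)*s)) volume 0 T :=
    (Real.continuous_sin.comp (continuous_const.mul continuous_id)).intervalIntegrable 0 T
  have h2 : IntervalIntegrable (fun s => Real.sin ((a-c)*s)) volume 0 T :=
    (Real.continuous_sin.comp (continuous_const.mul continuous_id)).intervalIntegrable 0 T
  rw [show (fun s => (Real.sin ((a+c)*s) + Real.sin ((a-c)*s))/2)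
      = fun s => (Real.sin ((a+c)*s) + Real.sin ((a-c)*s)) * (1/2) by funext s; ring]
  rw [intervalIntegral.integral_mul_const, intervalIntegral.integral_add h1 h2,
    hsin _ hpc.ne', hsin _ hmc.ne']
  have hne : a^2 - c^2 ≠ 0 := by nlinarith
  have hne2 : a + c ≠ 0 := hpc.ne'
  have hne3 : a - c ≠ 0 := hmc.ne'
  field_simp
  ring
noncomputable def cvf (t : ℝ) : ℝ := t * (Real.sqrt (1+t^2))⁻¹
noncomputable def cvf' (t : ℝ) : ℝ := ((1+t^2) * Real.sqrt (1+t^2))⁻¹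

lemma sqrt_one_add_sq_pos (t : ℝ) : 0 < Real.sqrt (1+t^2) :=
  Real.sqrt_pos.2 (by positivity)

lemma sq_sqrt_one_add (t : ℝ) : Real.sqrt (1+t^2) ^ 2 = 1 + t^2 :=
  Real.sq_sqrt (by positivity)

lemma cvf_hasDerivAt (t : ℝ) : HasDerivAt cvf (cvf' t) t := by
  have h0 : (1:ℝ) + t^2 ≠ 0 := by positivity
  have hs := sqrt_one_add_sq_pos t
  have h1 : HasDerivAt (fun t : ℝ => 1 + t^2) (2*t) t := by
    simpa using ((hasDerivAt_pow 2 t).const_add 1)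
  have h2 : HasDerivAt (fun t : ℝ => Real.sqrt (1+t^2)) (1 / (2 * Real.sqrt (1+t^2)) * (2*t)) t :=
    (Real.hasDerivAt_sqrt h0).comp t h1
  have h3 : HasDerivAt (fun t : ℝ => (Real.sqrt (1+t^2))⁻¹)
      (-(1 / (2 * Real.sqrt (1+t^2)) * (2*t)) / (Real.sqrt (1+t^2))^2) t := h2.inv hs.ne'
  have h4 : HasDerivAt cvf _ t := (hasDerivAt_id t).mul h3
  convert h4 using 1
  have hsq := sq_sqrt_one_add t
  simp only [cvf', id]
  field_simp
  nlinarith [hs, hsq]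

lemma cvf_image : cvf '' Set.Ioi 0 = Set.Ioo (0:ℝ) 1 := by
  ext u
  constructor
  · rintro ⟨t, ht, rfl⟩
    have ht' : (0:ℝ) < t := ht
    have hs := sqrt_one_add_sq_pos t
    have hsq := sq_sqrt_one_add t
    constructor
    · exact mul_pos ht' (inv_pos.2 hs)
    · show t * (Real.sqrt (1+t^2))⁻¹ < 1
      rw [mul_inv_lt_iff₀ hs, one_mul]
      nlinarith
  · intro hu
    have h1 : (0:ℝ) < 1 - u^2 := by nlinarith [hu.1, hu.2]
    have hsu : 0 < Real.sqrt (1-u^2) := Real.sqrt_pos.2 h1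
    refine ⟨u * (Real.sqrt (1-u^2))⁻¹, mul_pos hu.1 (inv_pos.2 hsu), ?_⟩
    have key : 1 + (u * (Real.sqrt (1-u^2))⁻¹)^2 = (1-u^2)⁻¹ := by
      have h6 : Real.sqrt (1-u^2) ^ 2 = 1 - u^2 := Real.sq_sqrt h1.le
      field_simp
      rw [h6]; ring
    show (u * (Real.sqrt (1-u^2))⁻¹) * (Real.sqrt (1 + (u * (Real.sqrt (1-u^2))⁻¹)^2))⁻¹ = u
    rw [key, Real.sqrt_inv, inv_inv, mul_assoc, inv_mul_cancel₀ hsu.ne', mul_one]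

lemma cvf_injOn : Set.InjOn cvf (Set.Ioi 0) := by
  intro t1 h1 t2 h2 he
  have hs1 := sqrt_one_add_sq_pos t1
  have hs2 := sqrt_one_add_sq_pos t2
  have hq1 := sq_sqrt_one_add t1
  have hq2 := sq_sqrt_one_add t2
  have h1' : (0:ℝ) < t1 := h1
  have h2' : (0:ℝ) < t2 := h2
  have key : t1 * Real.sqrt (1+t2^2) = t2 * Real.sqrt (1+t1^2) := by
    simp only [cvf] at he
    field_simp at he
    linarith [he]
  have key2 : t1^2 * (1+t2^2) = t2^2 * (1+t1^2) := by
    have h5 := congrArg (fun x => x^2) key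
    simp only [mul_pow, hq1, hq2] at h5
    exact h5
  have h4 : (t1 - t2) * (t1 + t2) = 0 := by linear_combination key2
  rcases mul_eq_zero.mp h4 with h | h
  · linarith
  · linarith
lemma arctan_integral {a c : ℝ} (ha : 0 < a) (hc : 0 < c) :
    ∫ t in Set.Ioi (0:ℝ), a / (a^2 + c^2*t^2) = Real.pi / (2*c) := by
  have hderiv : ∀ x ∈ Set.Ici (0:ℝ),
      HasDerivAt (fun t => c⁻¹ * Real.arctan (c/a*t)) (a / (a^2+c^2*x^2)) x := by
    intro x _
    have h1 : HasDerivAt (fun t : ℝ => c/a*t) (c/a) x := by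
      simpa using (hasDerivAt_id x).const_mul (c/a)
    have h2 := (Real.hasDerivAt_arctan (c/a*x)).comp x h1
    have h3 : HasDerivAt (fun t => c⁻¹ * Real.arctan (c/a*t)) _ x := h2.const_mul c⁻¹
    convert h3 using 1
    have h9 : (0:ℝ) < a^2 + c^2*x^2 := by positivity
    field_simp
  have hint : IntegrableOn (fun t => a / (a^2+c^2*t^2)) (Set.Ioi (0:ℝ)) := by
    apply Integrable.mono' (((integrable_inv_one_add_sq).restrict (s := Set.Ioi 0)).const_mul (a⁻¹ + a/c^2))
    · apply Continuous.aestronglyMeasurable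
      exact continuous_const.div (by continuity) (fun t => (by positivity : (0:ℝ) < a^2+c^2*t^2).ne')
    · filter_upwards with t
      have h9 : (0:ℝ) < a^2 + c^2*t^2 := by positivity
      have h10 : (0:ℝ) < 1 + t^2 := by positivity
      rw [Real.norm_eq_abs, abs_of_nonneg (by positivity)]
      rw [← div_eq_mul_inv, div_le_div_iff₀ h9 h10]
      have hc2 : (0:ℝ) < c^2 := by positivity
      have hi1 : a⁻¹ * a = 1 := inv_mul_cancel₀ ha.ne'
      have hi2 : a/c^2 * c^2 = a := div_mul_cancel₀ a hc2.ne'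
      have h11 : (0:ℝ) ≤ a⁻¹ * c^2 * t^2 :=
        mul_nonneg (mul_nonneg (inv_pos.2 ha).le hc2.le) (sq_nonneg t)
      have h12 : (0:ℝ) ≤ a/c^2 * a^2 := by positivity
      nlinarith [hi1, hi2, h11, h12, sq_nonneg t, ha.le]
  have htend : Tendsto (fun t => c⁻¹ * Real.arctan (c/a*t)) atTop (𝓝 (c⁻¹ * (Real.pi/2))) := by
    apply Tendsto.const_mul
    apply (tendsto_nhds_of_tendsto_nhdsWithin Real.tendsto_arctan_atTop).comp
    exact (tendsto_id.const_mul_atTop (by positivity : (0:ℝ) < c/a))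
  rw [MeasureTheory.integral_Ioi_of_hasDerivAt_of_tendsto' hderiv hint htend]
  simp
  ring

lemma integrand_cv {a b : ℝ} (hb : 0 < b) (hab : b < a) (t : ℝ) :
    |cvf' t| * ((a / (a^2 - b^2 * (cvf t)^2)) * bw (cvf t))
      = a / (a^2 + (a^2-b^2) * t^2) := by
  have hr := sqrt_one_add_sq_pos t
  have hr2 := sq_sqrt_one_add t
  have h1t : (0:ℝ) < 1 + t^2 := by positivity
  have hcv2 : (cvf t)^2 = t^2 * (1+t^2)⁻¹ := by
    simp only [cvf, mul_pow, inv_pow, hr2]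
  have h7 : (1:ℝ) - (cvf t)^2 = (1+t^2)⁻¹ := by rw [hcv2]; field_simp; ring
  have hbw : bw (cvf t) = Real.sqrt (1+t^2) := by
    rw [bw, h7, Real.sqrt_inv, inv_inv]
  have ha : (0:ℝ) < a := hb.trans hab
  have h12 : (0:ℝ) < a^2 - b^2 := by nlinarith
  have h9 : (0:ℝ) < a^2 + (a^2-b^2)*t^2 := by
    nlinarith [mul_nonneg h12.le (sq_nonneg t), pow_pos ha 2]
  have h8 : a^2 - b^2 * (cvf t)^2 = (a^2 + (a^2-b^2)*t^2) * (1+t^2)⁻¹ := by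
    rw [hcv2]; field_simp; ring
  rw [hbw, h8]
  have hcvp : (0:ℝ) < cvf' t := by
    simp only [cvf']
    positivity
  rw [abs_of_pos hcvp]
  simp only [cvf']
  rw [mul_inv, div_mul_eq_mul_div, mul_comm]
  field_simp

lemma K_eq {a b : ℝ} (hb : 0 < b) (hab : b < a) :
    ∫ u in Set.Ioo (0:ℝ) 1, (a / (a^2 - b^2*u^2)) * bw u
      = Real.pi / (2 * Real.sqrt (a^2 - b^2)) := by
  have ha : (0:ℝ) < a := hb.trans hab
  have hc2 : (0:ℝ) < a^2 - b^2 := by nlinarith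
  have hc : 0 < Real.sqrt (a^2-b^2) := Real.sqrt_pos.2 hc2
  have hcsq : Real.sqrt (a^2-b^2) ^ 2 = a^2 - b^2 := Real.sq_sqrt hc2.le
  rw [← cvf_image, integral_image_eq_integral_abs_deriv_smul measurableSet_Ioi
    (fun t _ => (cvf_hasDerivAt t).hasDerivWithinAt) cvf_injOn]
  rw [show (∫ t in Set.Ioi (0:ℝ), |cvf' t| • ((a / (a^2 - b^2*(cvf t)^2)) * bw (cvf t)))
      = ∫ t in Set.Ioi (0:ℝ), a / (a^2 + (Real.sqrt (a^2-b^2))^2 * t^2) from ?_]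
  · rw [arctan_integral ha hc]
  · apply setIntegral_congr_fun measurableSet_Ioi
    intro t _
    simp only [smul_eq_mul]
    rw [integrand_cv hb hab t, hcsq]
lemma RL {h : ℝ → ℝ} (hi : IntegrableOn h (Set.Ioo (0:ℝ) 1)) {b : ℝ} (hb : 0 < b) :
    Tendsto (fun T : ℝ => ∫ u in Set.Ioo (0:ℝ) 1, Real.cos (b*u*T) * h u) atTop (𝓝 0) ∧
    Tendsto (fun T : ℝ => ∫ u in Set.Ioo (0:ℝ) 1, Real.sin (b*u*T) * h u) atTop (𝓝 0) := by
  have hpi := Real.pi_pos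
  have hi' : Integrable (Set.indicator (Set.Ioo (0:ℝ) 1) h) volume :=
    hi.integrable_indicator measurableSet_Ioo
  set H : ℝ → ℂ := fun u => ((Set.indicator (Set.Ioo (0:ℝ) 1) h u : ℝ) : ℂ) with hHdef
  have hHint : Integrable H volume := hi'.ofReal
  have hfreq : Tendsto (fun T : ℝ => -(b*T/(2*Real.pi))) atTop atBot := by
    apply Filter.tendsto_neg_atTop_atBot.comp
    apply Filter.Tendsto.atTop_div_const (by positivity)
    exact tendsto_id.const_mul_atTop hb
  have hfour : Tendsto (fun T : ℝ => FourierTransform.fourier H (-(b*T/(2*Real.pi)))) atTop (𝓝 0) :=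
    (Real.zero_at_infty_fourier H).comp (hfreq.mono_right _root_.atBot_le_cocompact)
  have hint2 : ∀ T : ℝ, Integrable (fun v : ℝ =>
      Complex.exp (↑(-2 * Real.pi * v * (-(b*T/(2*Real.pi)))) * Complex.I) * H v) volume := by
    intro T
    apply hHint.bdd_mul
    · apply Continuous.aestronglyMeasurable
      apply Complex.continuous_exp.comp
      exact (Complex.continuous_ofReal.comp (by continuity)).mul continuous_const
    · exact ae_of_all _ (fun x => (Complex.norm_exp_ofReal_mul_I _).le)
  have hsimp : ∀ T v : ℝ, (-2 * Real.pi * v * (-(b*T/(2*Real.pi)))) = b*v*T := by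
    intro T v
    field_simp
  have hre : ∀ T : ℝ, (FourierTransform.fourier H (-(b*T/(2*Real.pi)))).re
      = ∫ u in Set.Ioo (0:ℝ) 1, Real.cos (b*u*T) * h u := by
    intro T
    rw [Real.fourier_real_eq_integral_exp_smul]
    simp_rw [smul_eq_mul]
    rw [show ((∫ v : ℝ, Complex.exp (↑(-2 * Real.pi * v * (-(b*T/(2*Real.pi)))) * Complex.I) * H v).re)
        = ∫ v : ℝ, (Complex.exp (↑(-2 * Real.pi * v * (-(b*T/(2*Real.pi)))) * Complex.I) * H v).re
      from (integral_re (hint2 T)).symm]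
    rw [← MeasureTheory.integral_indicator (measurableSet_Ioo (a := (0:ℝ)) (b := 1))]
    congr 1
    funext v
    rw [hsimp T v]
    by_cases hv : v ∈ Set.Ioo (0:ℝ) 1
    · simp only [hHdef, Set.indicator_of_mem hv]
      rw [Complex.mul_re, Complex.exp_ofReal_mul_I_re, Complex.exp_ofReal_mul_I_im,
        Complex.ofReal_re, Complex.ofReal_im, mul_zero, sub_zero]
    · simp only [hHdef, Set.indicator_of_notMem hv]
      simp
  have him : ∀ T : ℝ, (FourierTransform.fourier H (-(b*T/(2*Real.pi)))).im
      = ∫ u in Set.Ioo (0:ℝ) 1, Real.sin (b*u*T) * h u := by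
    intro T
    rw [Real.fourier_real_eq_integral_exp_smul]
    simp_rw [smul_eq_mul]
    rw [show ((∫ v : ℝ, Complex.exp (↑(-2 * Real.pi * v * (-(b*T/(2*Real.pi)))) * Complex.I) * H v).im)
        = ∫ v : ℝ, (Complex.exp (↑(-2 * Real.pi * v * (-(b*T/(2*Real.pi)))) * Complex.I) * H v).im
      from (integral_im (hint2 T)).symm]
    rw [← MeasureTheory.integral_indicator (measurableSet_Ioo (a := (0:ℝ)) (b := 1))]
    congr 1
    funext v
    rw [hsimp T v]
    by_cases hv : v ∈ Set.Ioo (0:ℝ) 1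
    · simp only [hHdef, Set.indicator_of_mem hv]
      rw [Complex.mul_im, Complex.exp_ofReal_mul_I_re, Complex.exp_ofReal_mul_I_im,
        Complex.ofReal_re, Complex.ofReal_im, mul_zero, zero_add]
    · simp only [hHdef, Set.indicator_of_notMem hv]
      simp
  constructor
  · have := (Complex.continuous_re.tendsto 0).comp hfour
    simp only [Complex.zero_re, Function.comp_def] at this
    refine this.congr fun T => hre T
  · have := (Complex.continuous_im.tendsto 0).comp hfour
    simp only [Complex.zero_im, Function.comp_def] at this
    refine this.congr fun T => him T
lemma abs_cos_div_le {x y : ℝ} (hy : 0 < y) (hxy : y ≤ x) (t : ℝ) : |Real.cos t / x| ≤ y⁻¹ := by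
  have hx : 0 < x := hy.trans_le hxy
  rw [abs_div, abs_of_pos hx, ← one_div y]
  exact div_le_div₀ (by norm_num) (Real.abs_cos_le_one t) hy hxy

/-- For `a > b > 0`, the improper integral `∫₀^∞ sin(a s) J₀(b s) ds` converges
(as a limit of `∫₀^T` as `T → ∞`) and equals `(a² - b²)^{-1/2}`. -/
theorem stmt1 (a b : ℝ) (hb : 0 < b) (hab : b < a) :
    Filter.Tendsto (fun T : ℝ => ∫ s in (0:ℝ)..T, Real.sin (a * s) * besselJ0 (b * s))
      Filter.atTop (nhds ((Real.sqrt (a ^ 2 - b ^ 2))⁻¹)) := by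
  have ha : (0:ℝ) < a := hb.trans hab
  have hc2 : (0:ℝ) < a^2 - b^2 := by nlinarith
  have hc : 0 < Real.sqrt (a^2 - b^2) := Real.sqrt_pos.2 hc2
  have hab' : (0:ℝ) < a - b := by linarith
  have hden : ∀ u ∈ Set.Ioo (0:ℝ) 1, a - b ≤ a - b*u ∧ a - b ≤ a + b*u := by
    intro u hu
    constructor <;> nlinarith [hu.1.le, hu.2.le]
  set p : ℝ → ℝ := fun u => ((a+b*u)⁻¹ + (a-b*u)⁻¹)/2 * bw u with hpdef
  set q : ℝ → ℝ := fun u => ((a-b*u)⁻¹ - (a+b*u)⁻¹)/2 * bw u with hqdef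
  have hmp : Measurable fun u : ℝ => ((a+b*u)⁻¹ + (a-b*u)⁻¹)/2 :=
    ((measurable_const.add (measurable_id.const_mul b)).inv.add
      (measurable_const.sub (measurable_id.const_mul b)).inv).div_const 2
  have hmq : Measurable fun u : ℝ => ((a-b*u)⁻¹ - (a+b*u)⁻¹)/2 :=
    ((measurable_const.sub (measurable_id.const_mul b)).inv.sub
      (measurable_const.add (measurable_id.const_mul b)).inv).div_const 2
  have hinvb : ∀ u ∈ Set.Ioo (0:ℝ) 1, (a+b*u)⁻¹ ≤ (a-b)⁻¹ ∧ (a-b*u)⁻¹ ≤ (a-b)⁻¹ := by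
    intro u hu
    exact ⟨inv_anti₀ hab' (hden u hu).2, inv_anti₀ hab' (hden u hu).1⟩
  have hinvpos : ∀ u ∈ Set.Ioo (0:ℝ) 1, (0:ℝ) < (a+b*u)⁻¹ ∧ (0:ℝ) < (a-b*u)⁻¹ :=
    fun u hu => ⟨inv_pos.2 (lt_of_lt_of_le hab' (hden u hu).2),
      inv_pos.2 (lt_of_lt_of_le hab' (hden u hu).1)⟩
  have hpint : IntegrableOn p (Set.Ioo (0:ℝ) 1) := by
    apply integrable_mul_bw hmp (C := (a-b)⁻¹)
    intro u hu
    obtain ⟨h1, h2⟩ := hinvpos u hu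
    obtain ⟨h3, h4⟩ := hinvb u hu
    rw [abs_of_nonneg (by linarith)]
    linarith
  have hqint : IntegrableOn q (Set.Ioo (0:ℝ) 1) := by
    apply integrable_mul_bw hmq (C := (a-b)⁻¹)
    intro u hu
    obtain ⟨h1, h2⟩ := hinvpos u hu
    obtain ⟨h3, h4⟩ := hinvb u hu
    rw [abs_le]
    constructor <;> linarith
  have hE1int : IntegrableOn (fun u => a/(a^2 - b^2*u^2) * bw u) (Set.Ioo (0:ℝ) 1) := by
    apply integrable_mul_bw (measurable_const.div
      (measurable_const.sub ((measurable_id.pow_const 2).const_mul (b^2)))) (C := a/(a^2-b^2))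
    intro u hu
    have hu2 : u^2 ≤ 1 := by nlinarith [hu.1.le, hu.2.le]
    have hd : a^2 - b^2 ≤ a^2 - b^2*u^2 := by nlinarith [mul_le_mul_of_nonneg_left hu2 (sq_nonneg b)]
    have hd0 : (0:ℝ) < a^2 - b^2*u^2 := lt_of_lt_of_le hc2 hd
    show |a / (a^2 - b^2*u^2)| ≤ a/(a^2-b^2)
    rw [abs_of_nonneg (by positivity)]
    exact div_le_div_of_nonneg_left ha.le hc2 hd
  have hE2int : ∀ T : ℝ, IntegrableOn (fun u =>
      (Real.cos ((a+b*u)*T)/(a+b*u) + Real.cos ((a-b*u)*T)/(a-b*u))/2 * bw u)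
      (Set.Ioo (0:ℝ) 1) := by
    intro T
    apply integrable_mul_bw (C := (a-b)⁻¹)
    · apply Measurable.div_const
      apply Measurable.add
      · exact (Real.measurable_cos.comp ((measurable_const.add
          (measurable_id.const_mul b)).mul_const T)).div
            (measurable_const.add (measurable_id.const_mul b))
      · exact (Real.measurable_cos.comp ((measurable_const.sub
          (measurable_id.const_mul b)).mul_const T)).div
            (measurable_const.sub (measurable_id.const_mul b))
    · intro u hu
      have b1 := abs_cos_div_le hab' (hden u hu).2 ((a+b*u)*T)
      have b2 := abs_cos_div_le hab' (hden u hu).1 ((a-b*u)*T)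
      calc |(Real.cos ((a+b*u)*T)/(a+b*u) + Real.cos ((a-b*u)*T)/(a-b*u))/2|
          ≤ (|Real.cos ((a+b*u)*T)/(a+b*u)| + |Real.cos ((a-b*u)*T)/(a-b*u)|)/2 := by
            rw [abs_div, abs_two]
            gcongr
            exact abs_add_le _ _
        _ ≤ (a-b)⁻¹ := by linarith
  have hdecomp : ∀ T : ℝ, 0 ≤ T →
      (∫ s in (0:ℝ)..T, Real.sin (a * s) * besselJ0 (b * s))
        = (Real.sqrt (a^2 - b^2))⁻¹
          - (2/Real.pi) * ∫ u in Set.Ioo (0:ℝ) 1,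
              (Real.cos ((a+b*u)*T)/(a+b*u) + Real.cos ((a-b*u)*T)/(a-b*u))/2 * bw u := by
    intro T hT
    have g1 : Integrable (fun _ : ℝ => (1:ℝ)) (volume.restrict (Set.Ioc 0 T)) := by
      rw [← IntegrableOn]
      exact integrableOn_const measure_Ioc_lt_top.ne
    have hdom := g1.mul_prod bw_integrableOn
    have hFub : Integrable (Function.uncurry fun s u => Real.sin (a*s) * (Real.cos ((b*u)*s) * bw u))
        ((volume.restrict (Set.Ioc 0 T)).prod (volume.restrict (Set.Ioo (0:ℝ) 1))) := by
      apply Integrable.mono' hdom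
      · apply Measurable.aestronglyMeasurable
        exact (Real.measurable_sin.comp (measurable_fst.const_mul a)).mul
          ((Real.measurable_cos.comp ((measurable_snd.const_mul b).mul measurable_fst)).mul
            (bw_measurable.comp measurable_snd))
      · apply ae_of_all
        intro z
        have e1 := Real.abs_sin_le_one (a*z.1)
        have e2 := Real.abs_cos_le_one ((b*z.2)*z.1)
        have e3 := bw_nonneg z.2
        rw [Real.norm_eq_abs, Function.uncurry, abs_mul, abs_mul, abs_of_nonneg e3, one_mul]
        calc |Real.sin (a*z.1)| * (|Real.cos ((b*z.2)*z.1)| * bw z.2)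
            ≤ |Real.cos ((b*z.2)*z.1)| * bw z.2 :=
              mul_le_of_le_one_left (by positivity) e1
          _ ≤ bw z.2 := mul_le_of_le_one_left e3 e2
    have hswap : (∫ s in (0:ℝ)..T, Real.sin (a * s) * besselJ0 (b * s))
        = (2/Real.pi) * ∫ u in Set.Ioo (0:ℝ) 1,
            (∫ s in (0:ℝ)..T, Real.sin (a*s) * Real.cos ((b*u)*s)) * bw u := by
      rw [intervalIntegral.integral_of_le hT]
      have hpt : ∀ s : ℝ, Real.sin (a*s) * besselJ0 (b*s)
          = (2/Real.pi) * ∫ u in Set.Ioo (0:ℝ) 1, Real.sin (a*s) * (Real.cos ((b*u)*s) * bw u) := by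
        intro s
        rw [besselJ0_eq (b*s), MeasureTheory.integral_const_mul]
        rw [show (∫ u in Set.Ioo (0:ℝ) 1, Real.cos (b*s*u) * bw u)
            = ∫ u in Set.Ioo (0:ℝ) 1, Real.cos ((b*u)*s) * bw u from
          setIntegral_congr_fun measurableSet_Ioo (fun u _ => by rw [show b*s*u = (b*u)*s by ring])]
        ring
      simp_rw [hpt]
      rw [MeasureTheory.integral_const_mul]
      congr 1
      rw [MeasureTheory.integral_integral_swap hFub]
      apply setIntegral_congr_fun measurableSet_Ioo
      intro u _
      simp_rw [← mul_assoc]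
      rw [MeasureTheory.integral_mul_const, intervalIntegral.integral_of_le hT]
    rw [hswap]
    have hinner : ∀ u ∈ Set.Ioo (0:ℝ) 1,
        (∫ s in (0:ℝ)..T, Real.sin (a*s) * Real.cos ((b*u)*s)) * bw u
          = a/(a^2 - b^2*u^2) * bw u
            - (Real.cos ((a+b*u)*T)/(a+b*u) + Real.cos ((a-b*u)*T)/(a-b*u))/2 * bw u := by
      intro u hu
      have hca : b*u < a := by nlinarith [hu.1, hu.2]
      have hca' : -a < b*u := by nlinarith [hu.1]
      rw [inner_integral ha hca hca' T]
      rw [show a^2 - (b*u)^2 = a^2 - b^2*u^2 by ring]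
      ring
    rw [setIntegral_congr_fun measurableSet_Ioo hinner]
    rw [MeasureTheory.integral_sub hE1int (hE2int T)]
    rw [mul_sub, K_eq hb hab]
    congr 1
    rw [eq_comm, inv_eq_iff_eq_inv]
    field_simp
  -- oscillatory part tends to zero
  have hosc : Tendsto (fun T : ℝ => (2/Real.pi) * ∫ u in Set.Ioo (0:ℝ) 1,
      (Real.cos ((a+b*u)*T)/(a+b*u) + Real.cos ((a-b*u)*T)/(a-b*u))/2 * bw u)
      atTop (𝓝 0) := by
    have hsplit : ∀ T : ℝ, (∫ u in Set.Ioo (0:ℝ) 1,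
        (Real.cos ((a+b*u)*T)/(a+b*u) + Real.cos ((a-b*u)*T)/(a-b*u))/2 * bw u)
          = Real.cos (a*T) * (∫ u in Set.Ioo (0:ℝ) 1, Real.cos (b*u*T) * p u)
            + Real.sin (a*T) * (∫ u in Set.Ioo (0:ℝ) 1, Real.sin (b*u*T) * q u) := by
      intro T
      rw [← MeasureTheory.integral_const_mul, ← MeasureTheory.integral_const_mul]
      have hCint : Integrable (fun u => Real.cos (a*T) * (Real.cos (b*u*T) * p u))
          (volume.restrict (Set.Ioo (0:ℝ) 1)) := by
        apply Integrable.const_mul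
        apply hpint.bdd_mul (c := 1)
        · exact (Real.continuous_cos.comp
            ((continuous_const.mul continuous_id).mul continuous_const)).aestronglyMeasurable
        · exact ae_of_all _ (fun u => by rw [Real.norm_eq_abs]; exact Real.abs_cos_le_one _)
      have hSint : Integrable (fun u => Real.sin (a*T) * (Real.sin (b*u*T) * q u))
          (volume.restrict (Set.Ioo (0:ℝ) 1)) := by
        apply Integrable.const_mul
        apply hqint.bdd_mul (c := 1)
        · exact (Real.continuous_sin.comp
            ((continuous_const.mul continuous_id).mul continuous_const)).aestronglyMeasurable
        · exact ae_of_all _ (fun u => by rw [Real.norm_eq_abs]; exact Real.abs_sin_le_one _)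
      rw [← MeasureTheory.integral_add hCint hSint]
      have hptw : ∀ u : ℝ, (Real.cos ((a+b*u)*T)/(a+b*u) + Real.cos ((a-b*u)*T)/(a-b*u))/2 * bw u
          = Real.cos (a*T) * (Real.cos (b*u*T) * p u) + Real.sin (a*T) * (Real.sin (b*u*T) * q u) := by
        intro u
        rw [show (a+b*u)*T = a*T + b*u*T by ring, show (a-b*u)*T = a*T - b*u*T by ring,
          Real.cos_add, Real.cos_sub]
        simp only [hpdef, hqdef]
        ring
      exact setIntegral_congr_fun measurableSet_Ioo fun u _ => hptw u
    have hC := (RL hpint hb).1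
    have hS := (RL hqint hb).2
    have t1 : Tendsto (fun T : ℝ => Real.cos (a*T)
        * (∫ u in Set.Ioo (0:ℝ) 1, Real.cos (b*u*T) * p u)) atTop (𝓝 0) := by
      rw [tendsto_zero_iff_abs_tendsto_zero]
      apply squeeze_zero (fun T => abs_nonneg _)
        (g := fun T : ℝ => |∫ u in Set.Ioo (0:ℝ) 1, Real.cos (b*u*T) * p u|) ?_ ?_
      · intro T
        rw [abs_mul]
        exact mul_le_of_le_one_left (abs_nonneg _) (Real.abs_cos_le_one _)
      · simpa using hC.abs
    have t2 : Tendsto (fun T : ℝ => Real.sin (a*T)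
        * (∫ u in Set.Ioo (0:ℝ) 1, Real.sin (b*u*T) * q u)) atTop (𝓝 0) := by
      rw [tendsto_zero_iff_abs_tendsto_zero]
      apply squeeze_zero (fun T => abs_nonneg _)
        (g := fun T : ℝ => |∫ u in Set.Ioo (0:ℝ) 1, Real.sin (b*u*T) * q u|) ?_ ?_
      · intro T
        rw [abs_mul]
        exact mul_le_of_le_one_left (abs_nonneg _) (Real.abs_sin_le_one _)
      · simpa using hS.abs
    have t3 := (t1.add t2).const_mul (2/Real.pi)
    simp only [add_zero, mul_zero] at t3
    apply t3.congr
    intro T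
    rw [← hsplit T]
  have hfinal : Tendsto (fun T : ℝ => (Real.sqrt (a^2 - b^2))⁻¹
      - (2/Real.pi) * ∫ u in Set.Ioo (0:ℝ) 1,
          (Real.cos ((a+b*u)*T)/(a+b*u) + Real.cos ((a-b*u)*T)/(a-b*u))/2 * bw u)
      atTop (𝓝 ((Real.sqrt (a^2 - b^2))⁻¹)) := by
    simpa using tendsto_const_nhds.sub hosc
  apply hfinal.congr'
  filter_upwards [eventually_ge_atTop (0:ℝ)] with T hT
  exact (hdecomp T hT).symm
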